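/- Composition lemma for unordered trees: for every m ∈ ℕ, if t₁, t₂, s₁, s₂ are nonempty finite unordered Σ-labeled trees, aᵢ is a node of tᵢ (i = 1,2), (t₁, a₁) ≡_m (t₂, a₂) and s₁ ≡_m s₂ with respect to first-order sentences of quantifier rank at most m, then ((t₁ ·_{a₁} s₁), a₁) ≡_m ((t₂ ·_{a₂} s₂), a₂), where t ·_a s denotes the tree obtained by attaching a fresh copy of s as a new child subtree of node a in t. -/

import Mathlib

open FirstOrder Language

/-- Quantifier rank of a first-order (bounded) formula. -/
def FirstOrder.Language.BoundedFormula.qr {L : FirstOrder.Language} {α : Type*} :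
    ∀ {n : ℕ}, L.BoundedFormula α n → ℕ
  | _, .falsum => 0
  | _, .equal _ _ => 0
  | _, .rel _ _ => 0
  | _, .imp f g => max f.qr g.qr
  | _, .all f => f.qr + 1

/-- Elementary equivalence up to quantifier rank `m` (for sentences). -/
def eqQR (L : FirstOrder.Language) (m : ℕ) (M N : Type)
    (SM : L.Structure M) (SN : L.Structure N) : Prop :=
  ∀ φ : L.Sentence, φ.qr ≤ m →
    ((letI := SM; M ⊨ φ) ↔ (letI := SN; N ⊨ φ))

/-- Elementary equivalence up to quantifier rank `m` of structures expanded with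
a constant for a distinguished element. -/
def eqQR1 (L : FirstOrder.Language) (m : ℕ) (M N : Type)
    (SM : L.Structure M) (SN : L.Structure N) (e : M) (e' : N) : Prop :=
  ∀ φ : L.Formula (Fin 1), φ.qr ≤ m →
    ((letI := SM; φ.Realize (fun _ => e)) ↔ (letI := SN; φ.Realize (fun _ => e')))

/-- An unordered `Alpha`-labeled tree on the set of nodes `P`: a partial order
`le` (the ancestor-descendant order) with a minimum (the root), in which the set
of predecessors of every element is linearly ordered, with a labeling `label`. -/
structure UTreeOn (Alpha P : Type) where
  le : P → P → Prop
  partialOrder : IsPartialOrder P le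
  root : P
  root_le : ∀ x, le root x
  pred_chain : ∀ x y z, le y x → le z x → (le y z ∨ le z y)
  label : P → Alpha

/-- The signature of labeled trees over `Alpha`: a binary order symbol and a
unary predicate for each label of `Alpha`. -/
def treeLang (Alpha : Type) : FirstOrder.Language :=
  ⟨fun _ => Empty, fun n => match n with
    | 1 => Alpha
    | 2 => Unit
    | _ => Empty⟩

/-- An unordered tree as a first-order structure over `treeLang Alpha`. -/
def treeStructure {Alpha P : Type} (t : UTreeOn Alpha P) :
    (treeLang Alpha).Structure P where
  funMap := fun {_} f => Empty.elim f
  RelMap := fun {n} => match n with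
    | 0 => fun r => Empty.elim r
    | 1 => fun (a : Alpha) x => t.label (x 0) = a
    | 2 => fun _ x => t.le (x 0) (x 1)
    | (_ + 3) => fun r => Empty.elim r

/-- The ancestor-descendant order of the join `t ·_a s`: the union of the two
orders together with all pairs `(b, c)` for `b` an ancestor of `a` (including
`a`) in `t` and `c` a node of (the fresh copy of) `s`. -/
def joinLE {T S : Type} (let' : T → T → Prop) (les : S → S → Prop) (a : T) :
    T ⊕ S → T ⊕ S → Prop
  | .inl b, .inl c => let' b c
  | .inr b, .inr c => les b c
  | .inl b, .inr _ => let' b a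
  | .inr _, .inl _ => False

/-- The join `t ·_a s` as a first-order structure over `treeLang Alpha`. -/
def joinStructure {Alpha T S : Type}
    (t : UTreeOn Alpha T) (s : UTreeOn Alpha S) (a : T) :
    (treeLang Alpha).Structure (T ⊕ S) where
  funMap := fun {_} f => Empty.elim f
  RelMap := fun {n} => match n with
    | 0 => fun r => Empty.elim r
    | 1 => fun (b : Alpha) x => Sum.elim t.label s.label (x 0) = b
    | 2 => fun _ x => joinLE t.le s.le a (x 0) (x 1)
    | (_ + 3) => fun r => Empty.elim r


def EF (L : Language) {M N : Type} (SM : L.Structure M) (SN : L.Structure N) :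
    ℕ → ∀ (γ : Type), (γ → M) → (γ → N) → Prop
  | 0 => fun γ v w =>
      (∀ i j : γ, v i = v j ↔ w i = w j) ∧
      ∀ (k : ℕ) (R : L.Relations k) (x : Fin k → γ),
        (SM.RelMap R (v ∘ x) ↔ SN.RelMap R (w ∘ x))
  | (n+1) => fun γ v w =>
      (∀ b : M, ∃ c : N, EF L SM SN n (γ ⊕ Unit) (Sum.elim v fun _ => b) (Sum.elim w fun _ => c)) ∧
      (∀ c : N, ∃ b : M, EF L SM SN n (γ ⊕ Unit) (Sum.elim v fun _ => b) (Sum.elim w fun _ => c))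

theorem EF_comp {L : Language} {M N : Type} {SM : L.Structure M} {SN : L.Structure N} :
    ∀ (n : ℕ) {γ : Type} {v : γ → M} {w : γ → N}, EF L SM SN n γ v w →
      ∀ {δ : Type} (f : δ → γ), EF L SM SN n δ (v ∘ f) (w ∘ f)
  | 0, γ, v, w, h, δ, f => ⟨fun i j => h.1 (f i) (f j), fun k R x => h.2 k R (f ∘ x)⟩
  | (n+1), γ, v, w, h, δ, f => by
    constructor
    · intro b
      obtain ⟨c, hc⟩ := h.1 b
      refine ⟨c, ?_⟩
      have := EF_comp n hc (Sum.map f (id : Unit → Unit))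
      have e1 : ((Sum.elim v fun _ => b) ∘ Sum.map f (id : Unit → Unit) : δ ⊕ Unit → M)
          = Sum.elim (v ∘ f) fun _ => b := by
        funext i; cases i <;> rfl
      have e2 : ((Sum.elim w fun _ => c) ∘ Sum.map f (id : Unit → Unit) : δ ⊕ Unit → N)
          = Sum.elim (w ∘ f) fun _ => c := by
        funext i; cases i <;> rfl
      rwa [e1, e2] at this
    · intro c
      obtain ⟨b, hb⟩ := h.2 c
      refine ⟨b, ?_⟩
      have := EF_comp n hb (Sum.map f (id : Unit → Unit))
      have e1 : ((Sum.elim v fun _ => b) ∘ Sum.map f (id : Unit → Unit) : δ ⊕ Unit → M)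
          = Sum.elim (v ∘ f) fun _ => b := by
        funext i; cases i <;> rfl
      have e2 : ((Sum.elim w fun _ => c) ∘ Sum.map f (id : Unit → Unit) : δ ⊕ Unit → N)
          = Sum.elim (w ∘ f) fun _ => c := by
        funext i; cases i <;> rfl
      rwa [e1, e2] at this

theorem EF_mono {L : Language} {M N : Type} {SM : L.Structure M} {SN : L.Structure N}
    [Nonempty M] :
    ∀ (n : ℕ) {γ : Type} {v : γ → M} {w : γ → N},
      EF L SM SN (n+1) γ v w → EF L SM SN n γ v w
  | 0, γ, v, w, h => by
    obtain ⟨b⟩ := ‹Nonempty M›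
    obtain ⟨c, hc⟩ := h.1 b
    exact EF_comp 0 hc Sum.inl
  | (n+1), γ, v, w, h => by
    constructor
    · intro b
      obtain ⟨c, hc⟩ := h.1 b
      exact ⟨c, EF_mono n hc⟩
    · intro c
      obtain ⟨b, hb⟩ := h.2 c
      exact ⟨b, EF_mono n hb⟩

theorem EF_le {L : Language} {M N : Type} {SM : L.Structure M} {SN : L.Structure N}
    [Nonempty M] {n n' : ℕ} (hle : n' ≤ n) {γ : Type} {v : γ → M} {w : γ → N}
    (h : EF L SM SN n γ v w) : EF L SM SN n' γ v w := by
  induction n with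
  | zero => obtain rfl := Nat.le_zero.mp hle; exact h
  | succ n ih =>
    rcases Nat.eq_or_lt_of_le hle with rfl | hlt
    · exact h
    · exact ih (by omega) (EF_mono n h)

theorem EF_refl {L : Language} {M : Type} {SM : L.Structure M} [Nonempty M] :
    ∀ (n : ℕ) {γ : Type} (v : γ → M), EF L SM SM n γ v v
  | 0, γ, v => ⟨fun _ _ => Iff.rfl, fun _ _ _ => Iff.rfl⟩
  | (n+1), γ, v => ⟨fun b => ⟨b, EF_refl n _⟩, fun b => ⟨b, EF_refl n _⟩⟩

theorem term_eq_var {L : Language} [hF : ∀ n, IsEmpty (L.Functions n)] {β : Type*}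
    (t : L.Term β) : ∃ i, t = Term.var i := by
  cases t with
  | var i => exact ⟨i, rfl⟩
  | func f ts => exact ((hF _).false f).elim

theorem EF_realize {L : Language} [hF : ∀ n, IsEmpty (L.Functions n)]
    {M N : Type} {SM : L.Structure M} {SN : L.Structure N} [Nonempty M] {α : Type}
    {k : ℕ} (φ : L.BoundedFormula α k) :
    ∀ (n : ℕ), φ.qr ≤ n →
      ∀ (v : α → M) (xs : Fin k → M) (w : α → N) (ys : Fin k → N),
        EF L SM SN n (α ⊕ Fin k) (Sum.elim v xs) (Sum.elim w ys) →
        ((letI := SM; φ.Realize v xs) ↔ (letI := SN; φ.Realize w ys)) := by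
  induction φ with
  | falsum => exact fun _ _ _ _ _ _ _ => Iff.rfl
  | equal t₁ t₂ =>
    intro n _ v xs w ys hef
    obtain ⟨i, rfl⟩ := term_eq_var t₁
    obtain ⟨j, rfl⟩ := term_eq_var t₂
    have h0 := EF_le (Nat.zero_le n) hef
    exact h0.1 i j
  | rel R ts =>
    intro n _ v xs w ys hef
    have h0 := EF_le (Nat.zero_le n) hef
    have hx : ∀ o, ∃ i, ts o = Term.var i := fun o => term_eq_var (ts o)
    choose x hxx using hx
    have e1 : (fun o => Term.realize (Sum.elim v xs) (ts o)) = (Sum.elim v xs) ∘ x := by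
      funext o; rw [hxx o]; rfl
    have e2 : (fun o => Term.realize (Sum.elim w ys) (ts o)) = (Sum.elim w ys) ∘ x := by
      funext o; rw [hxx o]; rfl
    have := h0.2 _ R x
    rw [← e1, ← e2] at this
    exact this
  | imp f g ihf ihg =>
    intro n hqr v xs w ys hef
    simp only [BoundedFormula.qr, max_le_iff] at hqr
    letI := SM; letI := SN
    simp only [BoundedFormula.realize_imp]
    rw [ihf n hqr.1 v xs w ys hef, ihg n hqr.2 v xs w ys hef]
  | @all k f ih =>
    intro n hqr v xs w ys hef
    simp only [BoundedFormula.qr] at hqr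
    have hef' : EF L SM SN (f.qr + 1) (α ⊕ Fin k) (Sum.elim v xs) (Sum.elim w ys) :=
      EF_le hqr hef
    letI := SM; letI := SN
    simp only [BoundedFormula.realize_all]
    have key : ∀ (b : M) (c : N),
        EF L SM SN f.qr ((α ⊕ Fin k) ⊕ Unit)
          (Sum.elim (Sum.elim v xs) fun _ => b) (Sum.elim (Sum.elim w ys) fun _ => c) →
        (f.Realize v (Fin.snoc xs b) ↔ f.Realize w (Fin.snoc ys c)) := by
      intro b c hbc
      set F : α ⊕ Fin (k+1) → (α ⊕ Fin k) ⊕ Unit :=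
        Sum.elim (fun a => Sum.inl (Sum.inl a))
          (Fin.lastCases (Sum.inr ()) (fun j => Sum.inl (Sum.inr j))) with hF2
      have hFb : ((Sum.elim (Sum.elim v xs) fun _ => b) ∘ F : α ⊕ Fin (k+1) → M)
          = Sum.elim v (Fin.snoc xs b) := by
        funext i
        rcases i with a | j
        · rfl
        · refine Fin.lastCases ?_ (fun j' => ?_) j
          · simp [hF2, Function.comp, Fin.snoc_last]
          · simp [hF2, Function.comp, Fin.snoc_castSucc]
      have hFc : ((Sum.elim (Sum.elim w ys) fun _ => c) ∘ F : α ⊕ Fin (k+1) → N)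
          = Sum.elim w (Fin.snoc ys c) := by
        funext i
        rcases i with a | j
        · rfl
        · refine Fin.lastCases ?_ (fun j' => ?_) j
          · simp [hF2, Function.comp, Fin.snoc_last]
          · simp [hF2, Function.comp, Fin.snoc_castSucc]
      have := EF_comp f.qr hbc F
      rw [hFb, hFc] at this
      exact ih f.qr le_rfl v (Fin.snoc xs b) w (Fin.snoc ys c) this
    constructor
    · intro hM c
      obtain ⟨b, hb⟩ := hef'.2 c
      exact (key b c hb).mp (hM b)
    · intro hN b
      obtain ⟨c, hc⟩ := hef'.1 b
      exact (key b c hc).mpr (hN c)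


section QRLemmas
variable {L : Language} {α : Type*} {n : ℕ}

theorem qr_bot : (⊥ : L.BoundedFormula α n).qr = 0 := rfl

theorem qr_not (φ : L.BoundedFormula α n) : φ.not.qr = φ.qr := by
  simp [BoundedFormula.not, BoundedFormula.qr, qr_bot]

theorem qr_top : (⊤ : L.BoundedFormula α n).qr = 0 := rfl

theorem qr_inf (φ ψ : L.BoundedFormula α n) : (φ ⊓ ψ).qr = max φ.qr ψ.qr := by
  show ((φ.imp ψ.not).not).qr = _
  simp [BoundedFormula.qr, qr_not, qr_bot]

theorem qr_sup (φ ψ : L.BoundedFormula α n) : (φ ⊔ ψ).qr = max φ.qr ψ.qr := by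
  show ((φ.not).imp ψ).qr = _
  simp [BoundedFormula.qr, qr_not]

theorem qr_all (φ : L.BoundedFormula α (n+1)) : φ.all.qr = φ.qr + 1 := rfl

theorem qr_ex (φ : L.BoundedFormula α (n+1)) : φ.ex.qr = φ.qr + 1 := by
  show ((φ.not.all).not).qr = _
  simp [BoundedFormula.qr, qr_not]

/-- Finite conjunction of a list of bounded formulas. -/
def conjList : List (L.BoundedFormula α n) → L.BoundedFormula α n
  | [] => ⊤
  | φ :: l => φ ⊓ conjList l

/-- Finite disjunction of a list of bounded formulas. -/
def disjList : List (L.BoundedFormula α n) → L.BoundedFormula α n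
  | [] => ⊥
  | φ :: l => φ ⊔ disjList l

theorem qr_conjList {m : ℕ} : ∀ {l : List (L.BoundedFormula α n)},
    (∀ φ ∈ l, φ.qr ≤ m) → (conjList l).qr ≤ m
  | [], _ => by simp [conjList, qr_top]
  | φ :: l, h => by
    simp only [conjList, qr_inf, max_le_iff]
    exact ⟨h φ (by simp), qr_conjList fun ψ hψ => h ψ (by simp [hψ])⟩

theorem qr_disjList {m : ℕ} : ∀ {l : List (L.BoundedFormula α n)},
    (∀ φ ∈ l, φ.qr ≤ m) → (disjList l).qr ≤ m
  | [], _ => by simp [disjList, qr_bot]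
  | φ :: l, h => by
    simp only [disjList, qr_sup, max_le_iff]
    exact ⟨h φ (by simp), qr_disjList fun ψ hψ => h ψ (by simp [hψ])⟩

variable {M : Type} [L.Structure M] {v : α → M} {xs : Fin n → M}

theorem realize_conjList : ∀ {l : List (L.BoundedFormula α n)},
    ((conjList l).Realize v xs ↔ ∀ φ ∈ l, φ.Realize v xs)
  | [] => by simp [conjList]
  | φ :: l => by simp [conjList, realize_conjList]

theorem realize_disjList : ∀ {l : List (L.BoundedFormula α n)},
    ((disjList l).Realize v xs ↔ ∃ φ ∈ l, φ.Realize v xs)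
  | [] => by simp [disjList]
  | φ :: l => by simp [disjList, realize_disjList]

/-- A literal with sign given by a proposition. -/
noncomputable def lit (P : Prop) (φ : L.BoundedFormula α n) : L.BoundedFormula α n := by
  classical exact if P then φ else φ.not

theorem qr_lit (P : Prop) (φ : L.BoundedFormula α n) : (lit P φ).qr = φ.qr := by
  by_cases h : P <;> simp [lit, h, qr_not]

theorem realize_lit {P : Prop} {φ : L.BoundedFormula α n} :
    (lit P φ).Realize v xs ↔ (φ.Realize v xs ↔ P) := by
  by_cases h : P <;> simp [lit, h]

end QRLemmas

section TreeAtomic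
variable {Alpha : Type}

/-- A label symbol of `treeLang Alpha`. -/
def labRel (c : Alpha) : (treeLang Alpha).Relations 1 := c

/-- The order symbol of `treeLang Alpha`. -/
def leRel : (treeLang Alpha).Relations 2 := ()

variable {α : Type} {k : ℕ}

/-- Atomic equality formula. -/
def eqAt (i j : α ⊕ Fin k) : (treeLang Alpha).BoundedFormula α k :=
  BoundedFormula.equal (Term.var i) (Term.var j)

/-- Atomic label formula. -/
def labAt (c : Alpha) (i : α ⊕ Fin k) : (treeLang Alpha).BoundedFormula α k :=
  BoundedFormula.rel (labRel c) ![Term.var i]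

/-- Atomic order formula. -/
def leAt (i j : α ⊕ Fin k) : (treeLang Alpha).BoundedFormula α k :=
  BoundedFormula.rel leRel ![Term.var i, Term.var j]

theorem qr_eqAt (i j : α ⊕ Fin k) : (eqAt (Alpha := Alpha) i j).qr = 0 := rfl
theorem qr_labAt (c : Alpha) (i : α ⊕ Fin k) : (labAt c i).qr = 0 := rfl
theorem qr_leAt (i j : α ⊕ Fin k) : (leAt (Alpha := Alpha) i j).qr = 0 := rfl

variable {N : Type} [SN : (treeLang Alpha).Structure N] {v : α → N} {xs : Fin k → N}

theorem realize_eqAt {i j : α ⊕ Fin k} :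
    (eqAt (Alpha := Alpha) i j).Realize v xs ↔ Sum.elim v xs i = Sum.elim v xs j :=
  Iff.rfl

theorem realize_labAt {c : Alpha} {i : α ⊕ Fin k} :
    (labAt c i).Realize v xs ↔
      Structure.RelMap (labRel c) (Sum.elim v xs ∘ (fun _ : Fin 1 => i)) := by
  have e : (fun o => Term.realize (Sum.elim v xs) (![(Term.var i : (treeLang Alpha).Term (α ⊕ Fin k))] o))
      = Sum.elim v xs ∘ (fun _ : Fin 1 => i) := by
    funext o; fin_cases o; rfl
  exact iff_of_eq (congrArg _ e)

theorem realize_leAt {i j : α ⊕ Fin k} :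
    (leAt (Alpha := Alpha) i j).Realize v xs ↔
      Structure.RelMap (leRel (Alpha := Alpha)) (Sum.elim v xs ∘ ![i, j]) := by
  have e : (fun o => Term.realize (Sum.elim v xs) (![(Term.var i : (treeLang Alpha).Term (α ⊕ Fin k)), Term.var j] o))
      = Sum.elim v xs ∘ ![i, j] := by
    funext o; fin_cases o <;> rfl
  exact iff_of_eq (congrArg _ e)

end TreeAtomic

/-- Extension of an assignment by one more element. -/
def extV {α M : Type} {k : ℕ} (v : α ⊕ Fin k → M) (b : M) : α ⊕ Fin (k+1) → M :=
  Sum.elim (fun a => v (Sum.inl a)) (Fin.snoc (fun j => v (Sum.inr j)) b)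

theorem EF_succ_ext {L : Language} {M N : Type} {SM : L.Structure M} {SN : L.Structure N}
    {α : Type} {k : ℕ} {m : ℕ} {v : α ⊕ Fin k → M} {w : α ⊕ Fin k → N} :
    EF L SM SN (m+1) (α ⊕ Fin k) v w ↔
      ((∀ b : M, ∃ c : N, EF L SM SN m (α ⊕ Fin (k+1)) (extV v b) (extV w c)) ∧
       (∀ c : N, ∃ b : M, EF L SM SN m (α ⊕ Fin (k+1)) (extV v b) (extV w c))) := by
  have hg : ∀ (P : Type) (u : α ⊕ Fin k → P) (b : P),
      ((Sum.elim u fun _ : Unit => b) ∘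
        (Sum.elim (fun a => Sum.inl (Sum.inl a))
          (Fin.lastCases (Sum.inr ()) (fun j => Sum.inl (Sum.inr j))) :
            α ⊕ Fin (k+1) → (α ⊕ Fin k) ⊕ Unit)) = extV u b := by
    intro P u b
    funext i
    rcases i with a | j
    · rfl
    · refine Fin.lastCases ?_ (fun j' => ?_) j <;>
        simp [Function.comp, extV, Fin.snoc_last, Fin.snoc_castSucc]
  have hg' : ∀ (P : Type) (u : α ⊕ Fin k → P) (b : P),
      ((extV u b) ∘
        (Sum.elim (Sum.map id Fin.castSucc) (fun _ : Unit => Sum.inr (Fin.last k)) :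
          (α ⊕ Fin k) ⊕ Unit → α ⊕ Fin (k+1))) = Sum.elim u fun _ : Unit => b := by
    intro P u b
    funext i
    rcases i with (a | j) | u'
    · rfl
    · simp [Function.comp, extV, Fin.snoc_castSucc]
    · simp [Function.comp, extV, Fin.snoc_last]
  constructor
  · rintro ⟨h1, h2⟩
    constructor
    · intro b
      obtain ⟨c, hc⟩ := h1 b
      refine ⟨c, ?_⟩
      have := EF_comp m hc (Sum.elim (fun a => Sum.inl (Sum.inl a))
        (Fin.lastCases (Sum.inr ()) (fun j => Sum.inl (Sum.inr j))))
      rwa [hg M v b, hg N w c] at this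
    · intro c
      obtain ⟨b, hb⟩ := h2 c
      refine ⟨b, ?_⟩
      have := EF_comp m hb (Sum.elim (fun a => Sum.inl (Sum.inl a))
        (Fin.lastCases (Sum.inr ()) (fun j => Sum.inl (Sum.inr j))))
      rwa [hg M v b, hg N w c] at this
  · rintro ⟨h1, h2⟩
    constructor
    · intro b
      obtain ⟨c, hc⟩ := h1 b
      refine ⟨c, ?_⟩
      have := EF_comp m hc (Sum.elim (Sum.map id Fin.castSucc)
        (fun _ : Unit => Sum.inr (Fin.last k)))
      rwa [hg' M v b, hg' N w c] at this
    · intro c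
      obtain ⟨b, hb⟩ := h2 c
      refine ⟨b, ?_⟩
      have := EF_comp m hb (Sum.elim (Sum.map id Fin.castSucc)
        (fun _ : Unit => Sum.inr (Fin.last k)))
      rwa [hg' M v b, hg' N w c] at this

section Hintikka
variable {Alpha : Type} [Fintype Alpha] {M : Type} [Fintype M] {α : Type} [Fintype α]

/-- The rank-`m` Hintikka formula of the tuple `v` in `M`. -/
noncomputable def hin (SM : (treeLang Alpha).Structure M) :
    ℕ → (k : ℕ) → ((α ⊕ Fin k) → M) → (treeLang Alpha).BoundedFormula α k
  | 0 => fun k v => conjList (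
      ((Finset.univ : Finset ((α ⊕ Fin k) × (α ⊕ Fin k))).toList.map
        (fun p => lit (v p.1 = v p.2) (eqAt p.1 p.2))) ++
      ((Finset.univ : Finset (Alpha × (α ⊕ Fin k))).toList.map
        (fun p => lit (SM.RelMap (labRel p.1) (v ∘ fun _ : Fin 1 => p.2)) (labAt p.1 p.2))) ++
      ((Finset.univ : Finset ((α ⊕ Fin k) × (α ⊕ Fin k))).toList.map
        (fun p => lit (SM.RelMap leRel (v ∘ ![p.1, p.2])) (leAt p.1 p.2))))
  | (m+1) => fun k v =>
      conjList ((Finset.univ : Finset M).toList.map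
        (fun b => (hin SM m (k+1) (extV v b)).ex)) ⊓
      (disjList ((Finset.univ : Finset M).toList.map
        (fun b => hin SM m (k+1) (extV v b)))).all

theorem qr_hin (SM : (treeLang Alpha).Structure M) :
    ∀ (m k : ℕ) (v : (α ⊕ Fin k) → M), (hin SM m k v).qr ≤ m
  | 0, k, v => by
    apply qr_conjList
    intro φ hφ
    simp only [List.mem_append, List.mem_map] at hφ
    rcases hφ with (⟨p, _, rfl⟩ | ⟨p, _, rfl⟩) | ⟨p, _, rfl⟩ <;>
      simp [qr_lit, qr_eqAt, qr_labAt, qr_leAt]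
  | (m+1), k, v => by
    simp only [hin]
    rw [qr_inf]
    refine max_le ?_ ?_
    · apply qr_conjList
      intro φ hφ
      simp only [List.mem_map] at hφ
      obtain ⟨b, _, rfl⟩ := hφ
      rw [qr_ex]
      exact Nat.succ_le_succ (qr_hin SM m (k+1) _)
    · rw [qr_all]
      refine Nat.succ_le_succ (qr_disjList ?_)
      intro φ hφ
      simp only [List.mem_map] at hφ
      obtain ⟨b, _, rfl⟩ := hφ
      exact qr_hin SM m (k+1) _

theorem sum_elim_comp_inlr {P : Type*} {α : Type*} {k : ℕ} (w : α ⊕ Fin k → P) :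
    (Sum.elim (fun a => w (Sum.inl a)) (fun j => w (Sum.inr j)) : α ⊕ Fin k → P) = w := by
  funext i; cases i <;> rfl

theorem hin_realize (SM : (treeLang Alpha).Structure M) {N : Type}
    (SN : (treeLang Alpha).Structure N) :
    ∀ (m k : ℕ) (v : (α ⊕ Fin k) → M) (w : (α ⊕ Fin k) → N),
      ((letI := SN; (hin SM m k v).Realize (fun a => w (Sum.inl a)) (fun j => w (Sum.inr j))) ↔
        EF (treeLang Alpha) SM SN m (α ⊕ Fin k) v w)
  | 0, k, v, w => by
    letI := SN
    simp only [hin]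
    rw [realize_conjList]
    constructor
    · intro h
      refine ⟨fun i j => ?_, ?_⟩
      · have := h (lit (v i = v j) (eqAt i j)) (by
          refine List.mem_append.2 (Or.inl (List.mem_append.2 (Or.inl ?_)))
          exact List.mem_map_of_mem (Finset.mem_toList.mpr (Finset.mem_univ (i, j))))
        rw [realize_lit, realize_eqAt, sum_elim_comp_inlr] at this
        exact this.symm
      · intro k' R x
        match k' with
        | 0 => exact R.elim
        | 1 =>
          have := h (lit (SM.RelMap (labRel (show Alpha from R)) (v ∘ fun _ : Fin 1 => x 0))
              (labAt (show Alpha from R) (x 0))) (by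
            refine List.mem_append.2 (Or.inl (List.mem_append.2 (Or.inr ?_)))
            exact List.mem_map_of_mem
              (Finset.mem_toList.mpr (Finset.mem_univ ((show Alpha from R), x 0))))
          rw [realize_lit, realize_labAt, sum_elim_comp_inlr] at this
          have ex : (x : Fin 1 → α ⊕ Fin k) = fun _ => x 0 := by
            funext o; rw [Subsingleton.elim o 0]
          rw [ex]
          exact this.symm
        | 2 =>
          have := h (lit (SM.RelMap leRel (v ∘ ![x 0, x 1])) (leAt (x 0) (x 1))) (by
            refine List.mem_append.2 (Or.inr ?_)
            exact List.mem_map_of_mem (Finset.mem_toList.mpr (Finset.mem_univ (x 0, x 1))))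
          rw [realize_lit, realize_leAt, sum_elim_comp_inlr] at this
          have ex : (x : Fin 2 → α ⊕ Fin k) = ![x 0, x 1] := by
            funext o; fin_cases o <;> rfl
          rw [ex]
          exact this.symm
        | (k'' + 3) => exact R.elim
    · intro hEF φ hφ
      simp only [List.mem_append, List.mem_map] at hφ
      rcases hφ with (⟨p, _, rfl⟩ | ⟨p, _, rfl⟩) | ⟨p, _, rfl⟩
      · rw [realize_lit, realize_eqAt, sum_elim_comp_inlr]
        exact (hEF.1 p.1 p.2).symm
      · rw [realize_lit, realize_labAt, sum_elim_comp_inlr]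
        exact (hEF.2 1 (labRel p.1) (fun _ => p.2)).symm
      · rw [realize_lit, realize_leAt, sum_elim_comp_inlr]
        exact (hEF.2 2 leRel ![p.1, p.2]).symm
  | (m+1), k, v, w => by
    letI := SN
    simp only [hin]
    rw [BoundedFormula.realize_inf, BoundedFormula.realize_all, realize_conjList]
    rw [EF_succ_ext]
    constructor
    · rintro ⟨h1, h2⟩
      constructor
      · intro b
        have := h1 ((hin SM m (k+1) (extV v b)).ex)
          (List.mem_map_of_mem (Finset.mem_toList.mpr (Finset.mem_univ b)))
        rw [BoundedFormula.realize_ex] at this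
        obtain ⟨c, hc⟩ := this
        exact ⟨c, (hin_realize SM SN m (k+1) (extV v b) (extV w c)).mp hc⟩
      · intro c
        have := h2 c
        rw [realize_disjList] at this
        obtain ⟨φ, hφ, hr⟩ := this
        simp only [List.mem_map] at hφ
        obtain ⟨b, _, rfl⟩ := hφ
        exact ⟨b, (hin_realize SM SN m (k+1) (extV v b) (extV w c)).mp hr⟩
    · rintro ⟨h1, h2⟩
      constructor
      · intro φ hφ
        simp only [List.mem_map] at hφ
        obtain ⟨b, _, rfl⟩ := hφ
        rw [BoundedFormula.realize_ex]
        obtain ⟨c, hc⟩ := h1 b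
        exact ⟨c, (hin_realize SM SN m (k+1) (extV v b) (extV w c)).mpr hc⟩
      · intro c
        rw [realize_disjList]
        obtain ⟨b, hb⟩ := h2 c
        refine ⟨hin SM m (k+1) (extV v b), List.mem_map_of_mem (Finset.mem_toList.mpr (Finset.mem_univ b)), ?_⟩
        exact (hin_realize SM SN m (k+1) (extV v b) (extV w c)).mpr hb

theorem hin_self (SM : (treeLang Alpha).Structure M) [Nonempty M]
    (m k : ℕ) (v : (α ⊕ Fin k) → M) :
    (letI := SM; (hin SM m k v).Realize (fun a => v (Sum.inl a)) (fun j => v (Sum.inr j))) :=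
  (hin_realize SM SM m k v v).mpr (EF_refl m v)

end Hintikka


theorem treeStructure_rel1 {Alpha P : Type} (t : UTreeOn Alpha P) (c : Alpha)
    (y : Fin 1 → P) :
    (treeStructure t).RelMap (labRel c) y ↔ t.label (y 0) = c := Iff.rfl

theorem treeStructure_rel2 {Alpha P : Type} (t : UTreeOn Alpha P) (y : Fin 2 → P) :
    (treeStructure t).RelMap (leRel (Alpha := Alpha)) y ↔ t.le (y 0) (y 1) := Iff.rfl

theorem EF_join {Alpha T₁ T₂ S₁ S₂ : Type}
    (t₁ : UTreeOn Alpha T₁) (t₂ : UTreeOn Alpha T₂)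
    (s₁ : UTreeOn Alpha S₁) (s₂ : UTreeOn Alpha S₂) :
    ∀ (m : ℕ) {γT γS : Type} (a₁ : T₁) (a₂ : T₂)
      (vT : γT → T₁) (wT : γT → T₂) (vS : γS → S₁) (wS : γS → S₂) (i₀ : γT),
      vT i₀ = a₁ → wT i₀ = a₂ →
      EF (treeLang Alpha) (treeStructure t₁) (treeStructure t₂) m γT vT wT →
      EF (treeLang Alpha) (treeStructure s₁) (treeStructure s₂) m γS vS wS →
      EF (treeLang Alpha) (joinStructure t₁ s₁ a₁) (joinStructure t₂ s₂ a₂) m (γT ⊕ γS)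
        (Sum.elim (fun i => Sum.inl (vT i)) (fun i => Sum.inr (vS i)))
        (Sum.elim (fun i => Sum.inl (wT i)) (fun i => Sum.inr (wS i)))
  | 0, γT, γS, a₁, a₂, vT, wT, vS, wS, i₀, hv, hw, hT, hS => by
    subst hv; subst hw
    constructor
    · rintro (i | i) (j | j)
      · simpa only [Sum.elim_inl, Sum.inl.injEq] using hT.1 i j
      · simp
      · simp
      · simpa only [Sum.elim_inr, Sum.inr.injEq] using hS.1 i j
    · intro k R x
      match k with
      | 0 => exact R.elim
      | 1 =>
        show Sum.elim t₁.label s₁.label (Sum.elim _ _ (x 0)) = R ↔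
          Sum.elim t₂.label s₂.label (Sum.elim _ _ (x 0)) = R
        rcases x 0 with i | i
        · exact hT.2 1 R (fun _ => i)
        · exact hS.2 1 R (fun _ => i)
      | 2 =>
        show joinLE t₁.le s₁.le (vT i₀) (Sum.elim _ _ (x 0)) (Sum.elim _ _ (x 1)) ↔
          joinLE t₂.le s₂.le (wT i₀) (Sum.elim _ _ (x 0)) (Sum.elim _ _ (x 1))
        rcases x 0 with i | i <;> rcases x 1 with j | j
        · exact hT.2 2 (leRel (Alpha := Alpha)) ![i, j]
        · exact hT.2 2 (leRel (Alpha := Alpha)) ![i, i₀]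
        · exact Iff.rfl
        · exact hS.2 2 (leRel (Alpha := Alpha)) ![i, j]
      | (k' + 3) => exact R.elim
  | (m+1), γT, γS, a₁, a₂, vT, wT, vS, wS, i₀, hv, hw, hT, hS => by
    haveI : Nonempty T₁ := ⟨t₁.root⟩
    haveI : Nonempty S₁ := ⟨s₁.root⟩
    have eT : ∀ (T P : Type) (f : γT → T) (F : T → P) (g : γS → P) (b : T),
        ((Sum.elim (fun i => F (Sum.elim f (fun _ : Unit => b) i)) (fun i => g i)) ∘
          (Sum.elim (Sum.elim (fun i : γT => Sum.inl (Sum.inl i)) (fun i : γS => Sum.inr i))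
            (fun _ : Unit => Sum.inl (Sum.inr ())) :
            (γT ⊕ γS) ⊕ Unit → (γT ⊕ Unit) ⊕ γS))
        = Sum.elim (Sum.elim (fun i => F (f i)) (fun i => g i)) (fun _ : Unit => F b) := by
      intro T P f F g b
      funext i; rcases i with (i | i) | u <;> rfl
    have eS : ∀ (T P : Type) (f : γT → P) (g : γS → T) (F : T → P) (b : T),
        ((Sum.elim (fun i => f i) (fun i => F (Sum.elim g (fun _ : Unit => b) i))) ∘
          (Sum.elim (Sum.map (id : γT → γT) (Sum.inl : γS → γS ⊕ Unit))
            (fun _ : Unit => Sum.inr (Sum.inr ())) :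
            (γT ⊕ γS) ⊕ Unit → γT ⊕ (γS ⊕ Unit)))
        = Sum.elim (Sum.elim (fun i => f i) (fun i => F (g i))) (fun _ : Unit => F b) := by
      intro T P f g F b
      funext i; rcases i with (i | i) | u <;> rfl
    constructor
    · rintro (bT | bS)
      · obtain ⟨cT, hcT⟩ := hT.1 bT
        refine ⟨Sum.inl cT, ?_⟩
        have ih := EF_join t₁ t₂ s₁ s₂ m a₁ a₂
          (Sum.elim vT fun _ : Unit => bT) (Sum.elim wT fun _ : Unit => cT) vS wS
          (Sum.inl i₀) hv hw hcT (EF_mono m hS)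
        have := EF_comp m ih
          (Sum.elim (Sum.elim (fun i : γT => Sum.inl (Sum.inl i)) (fun i : γS => Sum.inr i))
            (fun _ : Unit => Sum.inl (Sum.inr ())))
        rwa [eT T₁ (T₁ ⊕ S₁) vT Sum.inl (fun i => Sum.inr (vS i)) bT,
          eT T₂ (T₂ ⊕ S₂) wT Sum.inl (fun i => Sum.inr (wS i)) cT] at this
      · obtain ⟨cS, hcS⟩ := hS.1 bS
        refine ⟨Sum.inr cS, ?_⟩
        have ih := EF_join t₁ t₂ s₁ s₂ m a₁ a₂ vT wT
          (Sum.elim vS fun _ : Unit => bS) (Sum.elim wS fun _ : Unit => cS)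
          i₀ hv hw (EF_mono m hT) hcS
        have := EF_comp m ih
          (Sum.elim (Sum.map (id : γT → γT) (Sum.inl : γS → γS ⊕ Unit))
            (fun _ : Unit => Sum.inr (Sum.inr ())))
        rwa [eS S₁ (T₁ ⊕ S₁) (fun i => Sum.inl (vT i)) vS Sum.inr bS,
          eS S₂ (T₂ ⊕ S₂) (fun i => Sum.inl (wT i)) wS Sum.inr cS] at this
    · rintro (cT | cS)
      · obtain ⟨bT, hbT⟩ := hT.2 cT
        refine ⟨Sum.inl bT, ?_⟩
        have ih := EF_join t₁ t₂ s₁ s₂ m a₁ a₂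
          (Sum.elim vT fun _ : Unit => bT) (Sum.elim wT fun _ : Unit => cT) vS wS
          (Sum.inl i₀) hv hw hbT (EF_mono m hS)
        have := EF_comp m ih
          (Sum.elim (Sum.elim (fun i : γT => Sum.inl (Sum.inl i)) (fun i : γS => Sum.inr i))
            (fun _ : Unit => Sum.inl (Sum.inr ())))
        rwa [eT T₁ (T₁ ⊕ S₁) vT Sum.inl (fun i => Sum.inr (vS i)) bT,
          eT T₂ (T₂ ⊕ S₂) wT Sum.inl (fun i => Sum.inr (wS i)) cT] at this
      · obtain ⟨bS, hbS⟩ := hS.2 cS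
        refine ⟨Sum.inr bS, ?_⟩
        have ih := EF_join t₁ t₂ s₁ s₂ m a₁ a₂ vT wT
          (Sum.elim vS fun _ : Unit => bS) (Sum.elim wS fun _ : Unit => cS)
          i₀ hv hw (EF_mono m hT) hbS
        have := EF_comp m ih
          (Sum.elim (Sum.map (id : γT → γT) (Sum.inl : γS → γS ⊕ Unit))
            (fun _ : Unit => Sum.inr (Sum.inr ())))
        rwa [eS S₁ (T₁ ⊕ S₁) (fun i => Sum.inl (vT i)) vS Sum.inr bS,
          eS S₂ (T₂ ⊕ S₂) (fun i => Sum.inl (wT i)) wS Sum.inr cS] at this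

/-- Composition lemma for unordered trees: if `(t₁, a₁) ≡_m (t₂, a₂)` and
`s₁ ≡_m s₂`, then `((t₁ ·_{a₁} s₁), a₁) ≡_m ((t₂ ·_{a₂} s₂), a₂)`. -/
theorem join_preserves_qr_equivalence (Alpha : Type) [Fintype Alpha] (m : ℕ)
    (T₁ T₂ S₁ S₂ : Type) [Fintype T₁] [Fintype T₂] [Fintype S₁] [Fintype S₂]
    (t₁ : UTreeOn Alpha T₁) (t₂ : UTreeOn Alpha T₂)
    (s₁ : UTreeOn Alpha S₁) (s₂ : UTreeOn Alpha S₂)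
    (a₁ : T₁) (a₂ : T₂)
    (ht : eqQR1 (treeLang Alpha) m T₁ T₂
      (treeStructure t₁) (treeStructure t₂) a₁ a₂)
    (hs : eqQR (treeLang Alpha) m S₁ S₂ (treeStructure s₁) (treeStructure s₂)) :
    eqQR1 (treeLang Alpha) m (T₁ ⊕ S₁) (T₂ ⊕ S₂)
      (joinStructure t₁ s₁ a₁) (joinStructure t₂ s₂ a₂)
      (Sum.inl a₁) (Sum.inl a₂) := by
  intro φ hφ
  haveI : ∀ n, IsEmpty ((treeLang Alpha).Functions n) := fun _ => inferInstanceAs (IsEmpty Empty)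
  haveI : Nonempty T₁ := ⟨t₁.root⟩
  haveI : Nonempty S₁ := ⟨s₁.root⟩
  haveI : Nonempty (T₁ ⊕ S₁) := ⟨Sum.inl t₁.root⟩
  -- EF equivalence of the expanded trees
  have hEFT : EF (treeLang Alpha) (treeStructure t₁) (treeStructure t₂) m (Fin 1 ⊕ Fin 0)
      (fun _ => a₁) (fun _ => a₂) := by
    have hq := qr_hin (α := Fin 1) (treeStructure t₁) m 0 (fun _ => a₁)
    have h1 : (letI := treeStructure t₁;
        Formula.Realize (hin (α := Fin 1) (treeStructure t₁) m 0 (fun _ => a₁))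
          (fun _ => a₁)) := by
      letI := treeStructure t₁
      show BoundedFormula.Realize _ (fun _ => a₁) default
      rw [show (default : Fin 0 → T₁)
          = (fun j : Fin 0 => (fun _ : Fin 1 ⊕ Fin 0 => a₁) (Sum.inr j)) from
          funext fun j => j.elim0]
      exact hin_self (α := Fin 1) (treeStructure t₁) m 0 (fun _ => a₁)
    have h2 := (ht _ hq).mp h1
    apply (hin_realize (treeStructure t₁) (treeStructure t₂) m 0 (fun _ => a₁)
      (fun _ => a₂)).mp
    letI := treeStructure t₂
    have e2 : (fun j : Fin 0 => (fun _ : Fin 1 ⊕ Fin 0 => a₂) (Sum.inr j))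
        = (default : Fin 0 → T₂) := funext fun j => j.elim0
    show BoundedFormula.Realize _ _ _
    rw [e2]
    exact h2
  have hEFS : EF (treeLang Alpha) (treeStructure s₁) (treeStructure s₂) m (Empty ⊕ Fin 0)
      (Sum.elim (fun e : Empty => e.elim) (fun j : Fin 0 => j.elim0))
      (Sum.elim (fun e : Empty => e.elim) (fun j : Fin 0 => j.elim0)) := by
    have hq := qr_hin (α := Empty) (treeStructure s₁) m 0
      (Sum.elim (fun e => e.elim) (fun j => j.elim0))
    have h1 : (letI := treeStructure s₁;
        Sentence.Realize (M := S₁) (hin (α := Empty) (treeStructure s₁) m 0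
          (Sum.elim (fun e => e.elim) (fun j => j.elim0)))) := by
      letI := treeStructure s₁
      show BoundedFormula.Realize _ default default
      rw [show (default : Empty → S₁)
          = (fun a : Empty => (Sum.elim (fun e : Empty => e.elim)
              (fun j : Fin 0 => j.elim0) : Empty ⊕ Fin 0 → S₁) (Sum.inl a)) from
          funext fun a => a.elim,
        show (default : Fin 0 → S₁)
          = (fun j : Fin 0 => (Sum.elim (fun e : Empty => e.elim)
              (fun j : Fin 0 => j.elim0) : Empty ⊕ Fin 0 → S₁) (Sum.inr j)) from
          funext fun j => j.elim0]
      exact hin_self (α := Empty) (treeStructure s₁) m 0 _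
    have h2 := (hs _ hq).mp h1
    apply (hin_realize (treeStructure s₁) (treeStructure s₂) m 0 _ _).mp
    letI := treeStructure s₂
    show BoundedFormula.Realize _ _ _
    rw [show (fun a : Empty => (Sum.elim (fun e : Empty => e.elim)
            (fun j : Fin 0 => j.elim0) : Empty ⊕ Fin 0 → S₂) (Sum.inl a))
          = (default : Empty → S₂) from funext fun a => a.elim,
      show (fun j : Fin 0 => (Sum.elim (fun e : Empty => e.elim)
            (fun j : Fin 0 => j.elim0) : Empty ⊕ Fin 0 → S₂) (Sum.inr j))
          = (default : Fin 0 → S₂) from funext fun j => j.elim0]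
    exact h2
  have hJ := EF_join t₁ t₂ s₁ s₂ m a₁ a₂ (fun _ => a₁) (fun _ => a₂)
    (Sum.elim (fun e : Empty => e.elim) (fun j : Fin 0 => j.elim0) : Empty ⊕ Fin 0 → S₁)
    (Sum.elim (fun e : Empty => e.elim) (fun j : Fin 0 => j.elim0) : Empty ⊕ Fin 0 → S₂)
    (Sum.inl 0) rfl rfl hEFT hEFS
  have hJ' := EF_comp m hJ (Sum.inl : (Fin 1 ⊕ Fin 0) → (Fin 1 ⊕ Fin 0) ⊕ (Empty ⊕ Fin 0))
  refine EF_realize (SM := joinStructure t₁ s₁ a₁) (SN := joinStructure t₂ s₂ a₂)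
    φ m hφ (fun _ => Sum.inl a₁) default (fun _ => Sum.inl a₂) default ?_
  have e1 : (Sum.elim (fun _ : Fin 1 => (Sum.inl a₁ : T₁ ⊕ S₁)) (default : Fin 0 → T₁ ⊕ S₁))
      = ((Sum.elim (fun i => Sum.inl ((fun _ => a₁) i)) (fun i =>
          Sum.inr ((Sum.elim (fun e : Empty => e.elim) (fun j : Fin 0 => j.elim0)) i))) ∘
        (Sum.inl : (Fin 1 ⊕ Fin 0) → (Fin 1 ⊕ Fin 0) ⊕ (Empty ⊕ Fin 0))) := by
    funext i; rcases i with i | j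
    · rfl
    · exact j.elim0
  have e2 : (Sum.elim (fun _ : Fin 1 => (Sum.inl a₂ : T₂ ⊕ S₂)) (default : Fin 0 → T₂ ⊕ S₂))
      = ((Sum.elim (fun i => Sum.inl ((fun _ => a₂) i)) (fun i =>
          Sum.inr ((Sum.elim (fun e : Empty => e.elim) (fun j : Fin 0 => j.elim0)) i))) ∘
        (Sum.inl : (Fin 1 ⊕ Fin 0) → (Fin 1 ⊕ Fin 0) ⊕ (Empty ⊕ Fin 0))) := by
    funext i; rcases i with i | j
    · rfl
    · exact j.elim0
  rw [e1, e2]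
  exact hJ'
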